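/- Let d ≥ 2 and let Γ = ⋃_{k=0}^{d−1} {λ e^{2πik/d} : 0 ≤ λ ≤ λ_0}. If s ≥ 1 and c > 0 satisfy r^{d/2}|sin(dθ/2)| ≥ c · d(re^{iθ}, Γ)^s for all sufficiently small r > 0 and all θ, then s ≥ d/2. (Test with θ = π/d: then the left side is r^{d/2} and d(z,Γ) = r sin(π/d).) -/

import Mathlib

open Real

private lemma aux_sin_mono (d : ℕ) (hd : 2 ≤ d) {x : ℝ} (h1 : π/d ≤ x) (h2 : x ≤ π - π/d) :
    Real.sin (π/d) ≤ Real.sin x := by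
  have hd0 : (0:ℝ) < d := by positivity
  have hpd : 0 < π/d := div_pos pi_pos hd0
  have hpd2 : π/d ≤ π/2 := by
    apply div_le_div_of_nonneg_left pi_pos.le (by norm_num)
    exact_mod_cast hd
  have mono := Real.strictMonoOn_sin.monotoneOn
  rcases le_or_gt x (π/2) with hx | hx
  · exact mono ⟨by linarith, hpd2⟩ ⟨by linarith, hx⟩ h1
  · rw [← Real.sin_pi_sub x]
    exact mono ⟨by linarith, hpd2⟩ ⟨by linarith, by linarith⟩ (by linarith)

private lemma aux_sin_bound (d : ℕ) (hd : 2 ≤ d) (m : ℤ) (hm : ¬ ((d:ℤ) ∣ m)) :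
    Real.sin (π/d) ≤ |Real.sin ((m:ℝ) * π / d)| := by
  have hd0 : (0:ℝ) < d := by positivity
  have hdz : (d:ℤ) ≠ 0 := by positivity
  set t : ℤ := m % d with ht
  have ht0 : 0 ≤ t := Int.emod_nonneg m hdz
  have htd : t < d := Int.emod_lt_of_pos m (by positivity)
  have ht1 : 1 ≤ t := by
    rcases ht0.lt_or_eq with h | h
    · exact h
    · exact absurd (Int.dvd_of_emod_eq_zero h.symm) hm
  have hmq : (d:ℤ) * (m / d) + t = m := Int.mul_ediv_add_emod m d
  have hcast : (m:ℝ) = (d:ℝ) * ((m / d : ℤ):ℝ) + (t:ℝ) := by exact_mod_cast hmq.symm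
  have hsplit : (m:ℝ) * π / d = (t:ℝ)*π/d + (m / d : ℤ) * π := by
    rw [hcast]; field_simp; ring
  rw [hsplit, Real.sin_add_int_mul_pi, abs_mul]
  have h1 : |((-1:ℝ)) ^ (m / d)| = 1 := by
    rcases Int.even_or_odd (m / (d:ℤ)) with he | ho
    · rw [he.neg_one_zpow]; norm_num
    · rw [ho.neg_one_zpow]; norm_num
  rw [h1, one_mul]
  have ht1' : (1:ℝ) ≤ (t:ℝ) := by exact_mod_cast ht1
  have htd' : (t:ℝ) + 1 ≤ (d:ℝ) := by exact_mod_cast htd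
  have hx1 : π/d ≤ (t:ℝ)*π/d := by
    gcongr
    exact le_mul_of_one_le_left pi_pos.le ht1'
  have hx2 : (t:ℝ)*π/d ≤ π - π/d := by
    rw [div_le_iff₀ hd0, sub_mul, div_mul_cancel₀ _ hd0.ne']
    nlinarith [mul_nonneg pi_pos.le (by linarith : (0:ℝ) ≤ (d:ℝ) - t - 1)]
  have hnn : 0 ≤ Real.sin ((t:ℝ)*π/d) := by
    apply Real.sin_nonneg_of_nonneg_of_le_pi
    · positivity
    · rw [div_le_iff₀ hd0]
      nlinarith [mul_nonneg pi_pos.le (by linarith : (0:ℝ) ≤ (d:ℝ) - t)]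
  rw [abs_of_nonneg hnn]
  exact aux_sin_mono d hd hx1 hx2

open Real in
theorem stmt14 (d : ℕ) (hd : 2 ≤ d) (lam0 : ℝ) (hlam0 : 0 < lam0)
    (Γ : Set ℂ)
    (hΓ : Γ = ⋃ k ∈ Finset.range d,
      {w : ℂ | ∃ lam : ℝ, 0 ≤ lam ∧ lam ≤ lam0 ∧
        w = (lam : ℂ) * Complex.exp (2 * π * Complex.I * k / d)})
    (s c r₀ : ℝ) (hs : 1 ≤ s) (hc : 0 < c) (hr₀ : 0 < r₀) (hr₀lam : r₀ ≤ lam0)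
    (h : ∀ r θ : ℝ, 0 < r → r ≤ r₀ →
      c * (Metric.infDist ((r : ℂ) * Complex.exp (Complex.I * θ)) Γ) ^ s ≤
        r ^ ((d : ℝ) / 2) * |Real.sin (d * θ / 2)|) :
    (d : ℝ) / 2 ≤ s := by
  have hd0 : (0:ℝ) < d := by positivity
  have hsin0 : 0 < Real.sin (π/d) := by
    apply Real.sin_pos_of_pos_of_lt_pi
    · positivity
    · rw [div_lt_iff₀ hd0]
      nlinarith [pi_pos, (show (2:ℝ) ≤ d by exact_mod_cast hd)]
  -- Γ is nonempty
  have hΓne : Γ.Nonempty := by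
    refine ⟨0, ?_⟩
    rw [hΓ]
    simp only [Set.mem_iUnion]
    exact ⟨0, Finset.mem_range.2 (by omega), 0, le_rfl, hlam0.le, by simp⟩
  -- key distance bound
  have key : ∀ r : ℝ, 0 < r →
      r * Real.sin (π/d) ≤ Metric.infDist ((r : ℂ) * Complex.exp (Complex.I * ((π/d : ℝ):ℂ))) Γ := by
    intro r hr
    rw [← not_lt, Metric.infDist_lt_iff hΓne]
    push_neg
    intro w hw
    rw [hΓ] at hw
    simp only [Set.mem_iUnion] at hw
    obtain ⟨k, hk, lam, hlam, _, rfl⟩ := hw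
    have hk' : k < d := Finset.mem_range.1 hk
    rw [Complex.dist_eq]
    set z : ℂ := (r : ℂ) * Complex.exp (Complex.I * ((π/d : ℝ):ℂ)) with hz
    by_cases hdvd : ((d:ℤ) ∣ (1 - 2*(k:ℤ)))
    · -- exp(2πik/d) = - exp(iπ/d)
      obtain ⟨j, hj⟩ := hdvd
      have hjodd : Odd j := by
        rcases Int.even_or_odd j with he | ho
        · exfalso
          have : Odd (1 - 2*(k:ℤ)) := by
            refine ⟨-(k:ℤ), by ring⟩
          rcases he with ⟨a, ha⟩
          have h2b : 1 - 2*(k:ℤ) = 2*((d:ℤ)*a) := by rw [hj, ha]; ring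
          omega
        · exact ho
      obtain ⟨a, ha⟩ := hjodd
      have hexp : Complex.exp (2 * π * Complex.I * k / d) = - Complex.exp (Complex.I * ((π/d : ℝ):ℂ)) := by
        have harg : (2 * π * Complex.I * k / d : ℂ) =
            Complex.I * ((π/d : ℝ):ℂ) - ((j:ℂ) * (π * Complex.I)) := by
          have hdc : ((d:ℂ)) ≠ 0 := by exact_mod_cast (show (d:ℝ) ≠ 0 by positivity)
          have : ((1:ℂ) - 2*(k:ℂ)) = (d:ℂ) * j := by exact_mod_cast hj
          push_cast
          have hj' : (j:ℂ) = (1 - 2*(k:ℂ))/d := by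
            rw [eq_div_iff hdc]; linear_combination -this
          rw [hj']; ring
        rw [harg, Complex.exp_sub]
        have hexpj : Complex.exp ((j:ℂ) * (π * Complex.I)) = -1 := by
          have : ((j:ℂ)) * (π * Complex.I) = (a:ℂ) * (2 * π * Complex.I) + π * Complex.I := by
            have : (j:ℂ) = 2*a + 1 := by exact_mod_cast ha
            rw [this]; ring
          rw [this, Complex.exp_add, Complex.exp_int_mul_two_pi_mul_I, Complex.exp_pi_mul_I]
          ring
        rw [hexpj]
        ring
      rw [hexp]
      have hzw : z - (lam:ℂ) * -Complex.exp (Complex.I * ((π/d : ℝ):ℂ))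
          = ((r + lam : ℝ):ℂ) * Complex.exp (Complex.I * ((π/d : ℝ):ℂ)) := by
        rw [hz]; push_cast; ring
      rw [hzw, norm_mul]
      have habs : ‖Complex.exp (Complex.I * ((π/d : ℝ):ℂ))‖ = 1 := by
        rw [mul_comm]; exact Complex.norm_exp_ofReal_mul_I _
      rw [habs, mul_one, Complex.norm_real, Real.norm_eq_abs, abs_of_nonneg (by linarith)]
      nlinarith [Real.sin_le_one (π/d), hsin0]
    · -- use imaginary part
      set m : ℤ := 1 - 2*(k:ℤ) with hm
      set φ : ℝ := 2 * π * k / d with hφ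
      have hwφ : (2 * π * Complex.I * k / d : ℂ) = (φ:ℂ) * Complex.I := by
        rw [hφ]; push_cast; field_simp
      have him : ((z - (lam:ℂ) * Complex.exp (2 * π * Complex.I * k / d)) *
          Complex.exp (-(φ:ℂ) * Complex.I)).im = r * Real.sin (π/d - φ) := by
        rw [hwφ, hz, sub_mul, mul_assoc, mul_assoc, ← Complex.exp_add, ← Complex.exp_add]
        have h1 : Complex.I * ((π/d : ℝ):ℂ) + -(φ:ℂ) * Complex.I = ((π/d - φ : ℝ):ℂ) * Complex.I := by
          push_cast; ring
        have h2 : (φ:ℂ) * Complex.I + -(φ:ℂ) * Complex.I = 0 := by ring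
        rw [h1, h2, Complex.exp_zero, mul_one, Complex.sub_im, Complex.mul_im,
          Complex.exp_ofReal_mul_I_im, Complex.exp_ofReal_mul_I_re]
        simp
      have habs1 : ‖Complex.exp (-(φ:ℂ) * Complex.I)‖ = 1 := by
        have : (-(φ:ℂ)) = ((-φ : ℝ):ℂ) := by push_cast; ring
        rw [this]; exact Complex.norm_exp_ofReal_mul_I _
      have hle : |r * Real.sin (π/d - φ)| ≤
          ‖z - (lam:ℂ) * Complex.exp (2 * π * Complex.I * k / d)‖ := by
        calc |r * Real.sin (π/d - φ)|
            = |((z - (lam:ℂ) * Complex.exp (2 * π * Complex.I * k / d)) *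
                Complex.exp (-(φ:ℂ) * Complex.I)).im| := by rw [him]
          _ ≤ ‖(z - (lam:ℂ) * Complex.exp (2 * π * Complex.I * k / d)) *
                Complex.exp (-(φ:ℂ) * Complex.I)‖ := Complex.abs_im_le_norm _
          _ = _ := by rw [norm_mul, habs1, mul_one]
      have hang : π/d - φ = (m:ℝ) * π / d := by
        rw [hφ, hm]; push_cast; field_simp
      have hsb : Real.sin (π/d) ≤ |Real.sin (π/d - φ)| := by
        rw [hang]; exact aux_sin_bound d hd m hdvd
      calc r * Real.sin (π/d) ≤ r * |Real.sin (π/d - φ)| := by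
            exact mul_le_mul_of_nonneg_left hsb hr.le
        _ = |r * Real.sin (π/d - φ)| := by
            rw [abs_mul, abs_of_nonneg hr.le]
        _ ≤ _ := hle
  -- main estimate: C * r^s ≤ r^(d/2)
  set C : ℝ := c * Real.sin (π/d) ^ s with hC
  have hC0 : 0 < C := by
    apply mul_pos hc
    exact Real.rpow_pos_of_pos hsin0 s
  have main : ∀ r : ℝ, 0 < r → r ≤ r₀ → C * r ^ s ≤ r ^ ((d:ℝ)/2) := by
    intro r hr hrr
    have h1 := h r (π/d) hr hrr
    have hsin1 : |Real.sin (d * (π/d) / 2)| = 1 := by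
      have : (d:ℝ) * (π/d) / 2 = π/2 := by field_simp
      rw [this, Real.sin_pi_div_two]; norm_num
    rw [hsin1, mul_one] at h1
    have hinf := key r hr
    have h2 : (r * Real.sin (π/d)) ^ s ≤
        (Metric.infDist ((r : ℂ) * Complex.exp (Complex.I * ((π/d : ℝ):ℂ))) Γ) ^ s := by
      apply Real.rpow_le_rpow (by positivity) hinf (by linarith)
    have h3 : (r * Real.sin (π/d)) ^ s = r ^ s * Real.sin (π/d) ^ s :=
      Real.mul_rpow hr.le hsin0.le
    calc C * r ^ s = c * ((r * Real.sin (π/d)) ^ s) := by rw [h3, hC]; ring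
      _ ≤ c * (Metric.infDist ((r : ℂ) * Complex.exp (Complex.I * ((π/d : ℝ):ℂ))) Γ) ^ s := by
          exact mul_le_mul_of_nonneg_left h2 hc.le
      _ ≤ r ^ ((d:ℝ)/2) := h1
  -- conclude
  by_contra hcon
  push_neg at hcon
  set ε : ℝ := (d:ℝ)/2 - s with hε
  have hε0 : 0 < ε := by rw [hε]; linarith
  set r : ℝ := min r₀ ((C/2) ^ (1/ε)) with hrdef
  have hCr2 : 0 < (C/2) ^ (1/ε) := Real.rpow_pos_of_pos (by linarith) _
  have hr : 0 < r := lt_min hr₀ hCr2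
  have h1 := main r hr (min_le_left _ _)
  have hsplit : r ^ ((d:ℝ)/2) = r ^ s * r ^ ε := by
    rw [← Real.rpow_add hr]; congr 1; rw [hε]; ring
  rw [hsplit] at h1
  have hrs : 0 < r ^ s := Real.rpow_pos_of_pos hr s
  have h2 : C ≤ r ^ ε := by
    have := (mul_le_mul_iff_of_pos_right hrs).1 (by linarith [h1] : C * r ^ s ≤ r ^ ε * r ^ s)
    linarith [this]
  have h3 : r ^ ε ≤ ((C/2) ^ (1/ε)) ^ ε :=
    Real.rpow_le_rpow hr.le (min_le_right _ _) hε0.le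
  have h4 : ((C/2) ^ (1/ε)) ^ ε = C/2 := by
    rw [← Real.rpow_mul (by linarith), one_div, inv_mul_cancel₀ hε0.ne', Real.rpow_one]
  rw [h4] at h3
  linarith
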